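/- arXiv:2603.07809 — 4 statements merged into one kernel-verified Lean document; each statement's English description precedes it below -/
import Mathlib

section
/- Let G be a finite graph whose vertices lie on a vertical line (so the vertex set is totally ordered by height), possibly with multiple edges. If for every vertex v both ldeg_G(v) (the number of edges, counted with multiplicity, from v to lower vertices) and hdeg_G(v) (the number of edges to higher vertices) are even, then the edge set of G can be partitioned into alternating cycles, i.e., closed trails whose consecutive edges alternate between up-edges and down-edges. -/
/-! Common definitions: vertical (multi)graphs on `Fin n` (vertices ordered by height,
vertex `v` at height `(v : ℕ)`), edges stored as pairs `(lower, upper)`. -/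

/-- Number of edges of `E` from `v` to strictly lower vertices
(i.e. edges whose upper endpoint is `v`), with multiplicity. -/
def ldeg {n : ℕ} (E : Multiset (Fin n × Fin n)) (v : Fin n) : ℕ :=
  (E.filter (fun e => e.2 = v)).card

/-- Number of edges of `E` from `v` to strictly higher vertices
(i.e. edges whose lower endpoint is `v`), with multiplicity. -/
def hdeg {n : ℕ} (E : Multiset (Fin n × Fin n)) (v : Fin n) : ℕ :=
  (E.filter (fun e => e.1 = v)).card

/-- An alternating cycle: a closed walk `w 0, w 1, …, w (2m) = w 0` whose edges
alternately go up and down (odd-indexed vertices are above both cyclic neighbours). -/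
structure AltCycle (n : ℕ) where
  m : ℕ
  pos : 0 < m
  w : ℕ → Fin n
  closed : w (2 * m) = w 0
  up : ∀ j < m, w (2 * j) < w (2 * j + 1)
  down : ∀ j < m, w (2 * j + 2) < w (2 * j + 1)

/-- The up-edges of an alternating cycle (as `(lower, upper)` pairs). -/
def AltCycle.upEdges {n : ℕ} (C : AltCycle n) : Multiset (Fin n × Fin n) :=
  (Multiset.range C.m).map (fun j => (C.w (2 * j), C.w (2 * j + 1)))

/-- The down-edges of an alternating cycle (as `(lower, upper)` pairs). -/
def AltCycle.downEdges {n : ℕ} (C : AltCycle n) : Multiset (Fin n × Fin n) :=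
  (Multiset.range C.m).map (fun j => (C.w (2 * j + 2), C.w (2 * j + 1)))

/-- All edges of an alternating cycle. -/
def AltCycle.edges {n : ℕ} (C : AltCycle n) : Multiset (Fin n × Fin n) :=
  C.upEdges + C.downEdges

/-- The edge multiset `E` can be partitioned into alternating cycles. -/
def AltPartition {n : ℕ} (E : Multiset (Fin n × Fin n)) : Prop :=
  ∃ (k : ℕ) (Cs : Fin k → AltCycle n), E = ∑ i, (Cs i).edges

/-- The undirected edge between `a` and `b`, stored as a `(lower, upper)` pair. -/
def stepEdge {n : ℕ} (a b : Fin n) : Fin n × Fin n := if a < b then (a, b) else (b, a)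

/-- `E` contains a (vertex-simple) cycle: a closed walk with pairwise distinct vertices
whose (undirected) edge multiset is contained in `E`. -/
def HasCycle {n : ℕ} (E : Multiset (Fin n × Fin n)) : Prop :=
  ∃ (len : ℕ) (w : ℕ → Fin n), 0 < len ∧ w len = w 0 ∧
    (∀ i < len, ∀ j < len, w i = w j → i = j) ∧
    ((Multiset.range len).map (fun j => stepEdge (w j) (w (j + 1)))) ≤ E

/-- Reachability (connectivity) in the multigraph with edge multiset `E`. -/
def Reach {n : ℕ} (E : Multiset (Fin n × Fin n)) (a b : Fin n) : Prop :=
  Relation.ReflTransGen (fun x y => (x, y) ∈ E ∨ (y, x) ∈ E) a b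

/-- The connected component of `v` in `E` is a single vertex or a path along
vertices of strictly increasing height. -/
def IncPathComp {n : ℕ} (E : Multiset (Fin n × Fin n)) (v : Fin n) : Prop :=
  ∃ (m : ℕ) (p : Fin (m + 1) → Fin n), StrictMono p ∧
    (∀ u, Reach E v u ↔ ∃ i, p i = u) ∧
    (∀ i : Fin m, (p i.castSucc, p i.succ) ∈ E)

/-- The edges present at stage `j` of the upward lower-star filtration:
those whose upper endpoint has height at most `j`. -/
def levelEdges {n : ℕ} (E : Multiset (Fin n × Fin n)) (j : ℕ) : Multiset (Fin n × Fin n) :=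
  E.filter (fun e => (e.2 : ℕ) ≤ j)

/-- Death time (elder rule) of the 0-dimensional class created by vertex `v` in the
upward lower-star filtration: the first height at which `v` gets connected to a
strictly lower (older) vertex, or `∞` if this never happens. -/
noncomputable def death0 {n : ℕ} (E : Multiset (Fin n × Fin n)) (v : Fin n) : ℕ∞ :=
  sInf ((fun j : ℕ => (j : ℕ∞)) '' {j : ℕ | ∃ u, u < v ∧ Reach (levelEdges E j) u v})

/-- The 0-dimensional verbose persistence diagram in the up direction: one point
per vertex, born at the height of the vertex. -/
noncomputable def diag0 {n : ℕ} (E : Multiset (Fin n × Fin n)) : Multiset (ℕ × ℕ∞) :=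
  (Finset.univ.val : Multiset (Fin n)).map (fun v : Fin n => ((v : ℕ), death0 E v))

/-- Number of edges entering at height `j` (upper endpoint of height `j`). -/
def edgesAt {n : ℕ} (E : Multiset (Fin n × Fin n)) (j : ℕ) : ℕ :=
  (E.filter (fun e => (e.2 : ℕ) = j)).card

/-- Number of 0-dimensional points dying at height `j` in the verbose diagram. -/
noncomputable def deaths0At {n : ℕ} (E : Multiset (Fin n × Fin n)) (j : ℕ) : ℕ :=
  Nat.card {v : Fin n // death0 E v = (j : ℕ∞)}

/-- Number of 1-dimensional classes born at height `j`: edges entering at height `j`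
that are creators rather than destructors. -/
noncomputable def cyclesBornAt {n : ℕ} (E : Multiset (Fin n × Fin n)) (j : ℕ) : ℕ :=
  edgesAt E j - deaths0At E j

/-- The graph with the vertical order reversed (for the down direction). -/
def flipE {n : ℕ} (E : Multiset (Fin n × Fin n)) : Multiset (Fin n × Fin n) :=
  E.map (fun e => (e.2.rev, e.1.rev))

/-- Equality of the verbose persistence diagrams in the up direction. -/
def UpDiagEq {n : ℕ} (E1 E2 : Multiset (Fin n × Fin n)) : Prop :=
  diag0 E1 = diag0 E2 ∧ ∀ j, cyclesBornAt E1 j = cyclesBornAt E2 j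

/-- Equality of VPHTs for vertical graphs: the verbose diagrams agree in both the
up and the down direction. -/
def VPHTEq {n : ℕ} (E1 E2 : Multiset (Fin n × Fin n)) : Prop :=
  UpDiagEq E1 E2 ∧ UpDiagEq (flipE E1) (flipE E2)

/-- Number of connected components of the multigraph with edge multiset `E`. -/
noncomputable def numComponents {n : ℕ} (E : Multiset (Fin n × Fin n)) : ℕ :=
  Nat.card (Quot (Reach E))

/-- The edge multiset `E` can be partitioned into cycles (closed trails). -/
def CircuitPartition {n : ℕ} (E : Multiset (Fin n × Fin n)) : Prop :=
  ∃ (k : ℕ) (len : Fin k → ℕ) (w : Fin k → ℕ → Fin n),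
    (∀ i, 0 < len i) ∧ (∀ i, w i (len i) = w i 0) ∧
    (∀ i, ∀ j < len i, w i j ≠ w i (j + 1)) ∧
    (∑ i, (Multiset.range (len i)).map (fun j => stepEdge (w i j) (w i (j + 1)))) = E
namespace APX
variable {n : ℕ}

lemma ldeg_cons (e : Fin n × Fin n) (E : Multiset (Fin n × Fin n)) (v : Fin n) :
    ldeg (e ::ₘ E) v = (if e.2 = v then 1 else 0) + ldeg E v := by
  simp only [ldeg, Multiset.filter_cons]
  split <;> simp <;> omega

lemma hdeg_cons (e : Fin n × Fin n) (E : Multiset (Fin n × Fin n)) (v : Fin n) :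
    hdeg (e ::ₘ E) v = (if e.1 = v then 1 else 0) + hdeg E v := by
  simp only [hdeg, Multiset.filter_cons]
  split <;> simp <;> omega

lemma ldeg_erase {E : Multiset (Fin n × Fin n)} {e} (he : e ∈ E) (v : Fin n) :
    ldeg E v = (if e.2 = v then 1 else 0) + ldeg (E.erase e) v := by
  conv_lhs => rw [← Multiset.cons_erase he]
  exact ldeg_cons ..

lemma hdeg_erase {E : Multiset (Fin n × Fin n)} {e} (he : e ∈ E) (v : Fin n) :
    hdeg E v = (if e.1 = v then 1 else 0) + hdeg (E.erase e) v := by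
  conv_lhs => rw [← Multiset.cons_erase he]
  exact hdeg_cons ..

lemma exists_snd {E : Multiset (Fin n × Fin n)} {p} (h : ¬ Even (ldeg E p)) :
    ∃ e ∈ E, e.2 = p := by
  have h0 : ldeg E p ≠ 0 := fun h0 => h (by simp [h0])
  obtain ⟨e, he⟩ := Multiset.card_pos_iff_exists_mem.mp (Nat.pos_of_ne_zero h0)
  exact ⟨e, (Multiset.mem_filter.mp he).1, (Multiset.mem_filter.mp he).2⟩

lemma exists_fst {E : Multiset (Fin n × Fin n)} {c} (h : ¬ Even (hdeg E c)) :
    ∃ e ∈ E, e.1 = c := by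
  have h0 : hdeg E c ≠ 0 := fun h0 => h (by simp [h0])
  obtain ⟨e, he⟩ := Multiset.card_pos_iff_exists_mem.mp (Nat.pos_of_ne_zero h0)
  exact ⟨e, (Multiset.mem_filter.mp he).1, (Multiset.mem_filter.mp he).2⟩

lemma range_succ_zero (k : ℕ) : Multiset.range (k+1) = 0 ::ₘ (Multiset.range k).map (·+1) := by
  rw [Multiset.range, List.range_succ_eq_map]; rfl

lemma ldeg_add (A B : Multiset (Fin n × Fin n)) (v) : ldeg (A+B) v = ldeg A v + ldeg B v := by
  simp [ldeg, Multiset.filter_add]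

lemma hdeg_add (A B : Multiset (Fin n × Fin n)) (v) : hdeg (A+B) v = hdeg A v + hdeg B v := by
  simp [hdeg, Multiset.filter_add]

lemma ldeg_map (s : Multiset ℕ) (x y : ℕ → Fin n) (v : Fin n) :
    ldeg (s.map (fun j => (x j, y j))) v = (s.filter (fun j => y j = v)).card := by
  simp [ldeg, Multiset.filter_map, Function.comp]

lemma hdeg_map (s : Multiset ℕ) (x y : ℕ → Fin n) (v : Fin n) :
    hdeg (s.map (fun j => (x j, y j))) v = (s.filter (fun j => x j = v)).card := by
  simp [hdeg, Multiset.filter_map, Function.comp]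

lemma shift_card (g : ℕ → Fin n) (v : Fin n) : ∀ m : ℕ,
    ((Multiset.range m).filter (fun j => g j = v)).card + (if g m = v then 1 else 0) =
    ((Multiset.range m).filter (fun j => g (j+1) = v)).card + (if g 0 = v then 1 else 0) := by
  intro m
  induction m with
  | zero => simp
  | succ m ih =>
    rw [Multiset.range_succ, Multiset.filter_cons, Multiset.filter_cons]
    rcases eq_or_ne (g m) v with h1 | h1 <;> rcases eq_or_ne (g (m+1)) v with h2 | h2 <;>
      simp [h1, h2] at ih ⊢ <;> omega

end APX

namespace APX
lemma trail : ∀ (N : ℕ) (R : Multiset (Fin n × Fin n)), R.card ≤ N →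
    (∀ e ∈ R, e.1 < e.2) → ∀ (a0 p : Fin n),
    (∀ v, ¬ Even (ldeg R v) ↔ v = p) → (∀ v, ¬ Even (hdeg R v) ↔ v = a0) →
    ∃ (m : ℕ) (w : ℕ → Fin n), 0 < m ∧ w 0 = a0 ∧ w 1 = p ∧ w (2*m) = a0 ∧
      (∀ j, 0 < j → j < m → w (2*j) < w (2*j+1)) ∧
      (∀ j < m, w (2*j+2) < w (2*j+1)) ∧
      ((Multiset.range m).map (fun j => (w (2*j+2), w (2*j+1))))
        + ((Multiset.range (m-1)).map (fun j => (w (2*j+2), w (2*j+3)))) ≤ R := by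
  intro N
  induction N with
  | zero =>
    intro R hcard _ a0 p hl _
    have hR0 : R = 0 := Multiset.card_eq_zero.mp (Nat.le_zero.mp hcard)
    subst hR0
    exact absurd ((hl p).mpr rfl) (by simp [ldeg])
  | succ N IH =>
    intro R hcard hR a0 p hl hh
    obtain ⟨e, heR, hep⟩ := exists_snd ((hl p).mpr rfl)
    have hcp : e.1 < p := hep ▸ hR e heR
    set R1 := R.erase e with hR1def
    have hlR1 : ∀ v, Even (ldeg R1 v) := by
      intro v
      have h1 := ldeg_erase heR v
      rw [← hR1def] at h1
      by_cases hv : v = p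
      · rw [if_pos (by rw [hep, hv])] at h1
        have h3 : ¬ Even (ldeg R v) := (hl v).mpr hv
        simp only [Nat.even_iff] at h3 ⊢; omega
      · rw [if_neg (fun hc : e.2 = v => hv (hc.symm.trans hep))] at h1
        have h3 : Even (ldeg R v) := by
          by_contra hc; exact hv ((hl v).mp hc)
        simp only [Nat.even_iff] at h3 ⊢; omega
    by_cases hca : e.1 = a0
    · -- terminate: single peak cycle
      refine ⟨1, fun k => if k = 1 then p else a0, one_pos, rfl, rfl, rfl, ?_, ?_, ?_⟩
      · intro j hj1 hj2; omega
      · intro j hj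
        interval_cases j
        simp only [Nat.mul_zero, Nat.zero_add]
        norm_num
        exact hca ▸ hcp
      · have he' : e = (a0, p) := Prod.ext_iff.mpr ⟨hca, hep⟩
        simp only [Nat.sub_self, Multiset.range_zero, Multiset.map_zero, add_zero,
          Multiset.range_succ, Multiset.map_cons, Multiset.map_zero]
        norm_num
        rw [← he']
        exact heR
    · -- continue
      have hhR1 : ∀ v, ¬ Even (hdeg R1 v) ↔ (v = a0 ∨ v = e.1) := by
        intro v
        have h1 := hdeg_erase heR v
        rw [← hR1def] at h1
        by_cases hv : e.1 = v
        · rw [if_pos hv] at h1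
          have h3 : Even (hdeg R v) := by
            by_contra hc; exact hca (hv.trans ((hh v).mp hc))
          refine iff_of_true ?_ (Or.inr hv.symm)
          simp only [Nat.even_iff] at h3 ⊢; omega
        · rw [if_neg hv] at h1
          have heq : hdeg R1 v = hdeg R v := by omega
          rw [heq, hh v]
          constructor
          · exact Or.inl
          · rintro (h | h)
            · exact h
            · exact absurd h.symm hv
      have hodd : ¬ Even (hdeg R1 e.1) := (hhR1 e.1).mpr (Or.inr rfl)
      obtain ⟨f, hfR1, hfc⟩ := exists_fst hodd
      have hfR : f ∈ R := Multiset.mem_of_mem_erase hfR1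
      have hcd : f.1 < f.2 := hR f hfR
      set R2 := R1.erase f with hR2def
      have hcard2 : R2.card ≤ N := by
        have h1 : R1.card = R.card - 1 := Multiset.card_erase_of_mem heR
        have h2 : R2.card = R1.card - 1 := Multiset.card_erase_of_mem hfR1
        have h3 : 0 < R1.card := Multiset.card_pos_iff_exists_mem.mpr ⟨f, hfR1⟩
        omega
      have hlR2 : ∀ v, ¬ Even (ldeg R2 v) ↔ v = f.2 := by
        intro v
        have h1 := ldeg_erase hfR1 v
        rw [← hR2def] at h1
        have h2 := hlR1 v
        by_cases hv : f.2 = v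
        · rw [if_pos hv] at h1
          refine iff_of_true ?_ hv.symm
          simp only [Nat.even_iff] at h2 ⊢; omega
        · rw [if_neg hv] at h1
          refine iff_of_false (not_not_intro ?_) (fun hc => hv hc.symm)
          simp only [Nat.even_iff] at h2 ⊢; omega
      have hhR2 : ∀ v, ¬ Even (hdeg R2 v) ↔ v = a0 := by
        intro v
        have h1 := hdeg_erase hfR1 v
        rw [← hR2def] at h1
        by_cases hv : f.1 = v
        · have hve : v = e.1 := by rw [← hv, hfc]
          rw [if_pos hv] at h1
          have h2 : ¬ Even (hdeg R1 v) := (hhR1 v).mpr (Or.inr hve)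
          refine iff_of_false (not_not_intro ?_) (fun hc => hca (by rw [← hve, hc]))
          simp only [Nat.even_iff] at h2 ⊢; omega
        · rw [if_neg hv] at h1
          have heq : hdeg R2 v = hdeg R1 v := by omega
          rw [heq, hhR1]
          constructor
          · rintro (h | h)
            · exact h
            · exact absurd (by rw [hfc, ← h] : f.1 = v) hv
          · exact Or.inl
      obtain ⟨m', w', pos', hw0', hw1', hcl', hup', hdn', hle'⟩ :=
        IH R2 hcard2 (fun g hg => hR g (Multiset.mem_of_mem_erase (Multiset.mem_of_mem_erase hg)))
          a0 f.2 hlR2 hhR2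
      set w : ℕ → Fin n := fun k => if k = 1 then p else if k = 2 then e.1 else w' (k - 2)
        with hwdef
      have hwk : ∀ k, 3 ≤ k → w k = w' (k - 2) := by
        intro k hk
        simp only [hwdef]
        rw [if_neg (by omega), if_neg (by omega)]
      have hw2 : w 2 = e.1 := by simp [hwdef]
      have hw1 : w 1 = p := by simp [hwdef]
      have hw0 : w 0 = a0 := by simpa [hwdef] using hw0'
      have hw3 : w 3 = f.2 := by rw [hwk 3 le_rfl]; exact hw1'
      refine ⟨m' + 1, w, Nat.succ_pos _, hw0, hw1, ?_, ?_, ?_, ?_⟩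
      · rw [hwk _ (by omega), show 2 * (m' + 1) - 2 = 2 * m' from by omega]
        exact hcl'
      · intro j hj0 hjm
        rcases Nat.exists_eq_add_of_le hj0 with ⟨i, hji⟩
        rcases Nat.eq_zero_or_pos i with rfl | hi
        · have hj1 : j = 1 := by omega
          subst hj1
          rw [show (2*1 : ℕ) = 2 from rfl, show (2*1+1 : ℕ) = 3 from rfl, hw2, hw3]
          exact hfc ▸ hcd
        · have := hup' i hi (by omega)
          rw [hwk (2*j) (by omega), hwk (2*j+1) (by omega),
            show 2*j - 2 = 2*i from by omega, show 2*j+1-2 = 2*i+1 from by omega]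
          exact this
      · intro j hj
        rcases Nat.eq_zero_or_pos j with rfl | hj0
        · rw [show (2*0+2 : ℕ) = 2 from rfl, show (2*0+1 : ℕ) = 1 from rfl, hw2, hw1]
          exact hcp
        · obtain ⟨i, rfl⟩ : ∃ i, j = i + 1 := ⟨j - 1, by omega⟩
          have := hdn' i (by omega)
          rw [hwk (2*(i+1)+2) (by omega), hwk (2*(i+1)+1) (by omega),
            show 2*(i+1)+2-2 = 2*i+2 from by omega, show 2*(i+1)+1-2 = 2*i+1 from by omega]
          exact this
      · have hds : (Multiset.range (m'+1)).map (fun j => (w (2*j+2), w (2*j+1)))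
            = e ::ₘ (Multiset.range m').map (fun j => (w' (2*j+2), w' (2*j+1))) := by
          rw [range_succ_zero, Multiset.map_cons, Multiset.map_map]
          refine congrArg₂ Multiset.cons ?_ ?_
          · show ((w (2*0+2), w (2*0+1)) : Fin n × Fin n) = e
            rw [show (2*0+2 : ℕ) = 2 from rfl, show (2*0+1 : ℕ) = 1 from rfl, hw2, hw1, ← hep]
          · refine Multiset.map_congr rfl ?_
            intro i _
            show (w (2*(i+1)+2), w (2*(i+1)+1)) = (w' (2*i+2), w' (2*i+1))
            rw [hwk (2*(i+1)+2) (by omega), hwk (2*(i+1)+1) (by omega),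
              show 2*(i+1)+2-2 = 2*i+2 from by omega, show 2*(i+1)+1-2 = 2*i+1 from by omega]
        have hus : (Multiset.range (m'+1-1)).map (fun j => (w (2*j+2), w (2*j+3)))
            = f ::ₘ (Multiset.range (m'-1)).map (fun j => (w' (2*j+2), w' (2*j+3))) := by
          rw [show m'+1-1 = m' from rfl]
          obtain ⟨m'', rfl⟩ : ∃ m'', m' = m'' + 1 := ⟨m'-1, by omega⟩
          rw [range_succ_zero, Multiset.map_cons, Multiset.map_map]
          refine congrArg₂ Multiset.cons ?_ ?_
          · show ((w (2*0+2), w (2*0+3)) : Fin n × Fin n) = f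
            rw [show (2*0+2 : ℕ) = 2 from rfl, show (2*0+3 : ℕ) = 3 from rfl, hw2, hw3, ← hfc]
          · refine Multiset.map_congr (by rw [show m''+1-1 = m'' from rfl]) ?_
            intro i _
            show (w (2*(i+1)+2), w (2*(i+1)+3)) = (w' (2*i+2), w' (2*i+3))
            rw [hwk (2*(i+1)+2) (by omega), hwk (2*(i+1)+3) (by omega),
              show 2*(i+1)+2-2 = 2*i+2 from by omega, show 2*(i+1)+3-2 = 2*i+3 from by omega]
        rw [hds, hus]
        have step2 : f ::ₘ ((Multiset.range m').map (fun j => (w' (2*j+2), w' (2*j+1)))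
            + (Multiset.range (m'-1)).map (fun j => (w' (2*j+2), w' (2*j+3)))) ≤ R1 := by
          rw [← Multiset.cons_erase hfR1]
          exact Multiset.cons_le_cons _ hle'
        have step3 : e ::ₘ f ::ₘ ((Multiset.range m').map (fun j => (w' (2*j+2), w' (2*j+1)))
            + (Multiset.range (m'-1)).map (fun j => (w' (2*j+2), w' (2*j+3)))) ≤ R := by
          rw [← Multiset.cons_erase heR]
          exact Multiset.cons_le_cons _ step2
        refine le_trans (le_of_eq ?_) step3
        rw [Multiset.cons_add, Multiset.add_cons]
end APX


namespace APX

lemma cycle_edges (m : ℕ) (hm : 0 < m) (w : ℕ → Fin n) :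
    (Multiset.range m).map (fun j => (w (2*j), w (2*j+1)))
      = (w 0, w 1) ::ₘ (Multiset.range (m-1)).map (fun j => (w (2*j+2), w (2*j+3))) := by
  obtain ⟨k, rfl⟩ : ∃ k, m = k+1 := ⟨m-1, by omega⟩
  rw [range_succ_zero, Multiset.map_cons, Multiset.map_map]
  refine congrArg₂ Multiset.cons rfl ?_
  refine Multiset.map_congr (by rw [show k+1-1 = k from rfl]) ?_
  intro i _
  show (w (2*(i+1)), w (2*(i+1)+1)) = (w (2*i+2), w (2*i+3))
  rw [show 2*(i+1) = 2*i+2 from by ring]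

lemma cycle_parity (m : ℕ) (w : ℕ → Fin n) (hw : w (2*m) = w 0) (v : Fin n) :
    Even (ldeg ((Multiset.range m).map (fun j => (w (2*j), w (2*j+1)))
      + (Multiset.range m).map (fun j => (w (2*j+2), w (2*j+1)))) v) ∧
    Even (hdeg ((Multiset.range m).map (fun j => (w (2*j), w (2*j+1)))
      + (Multiset.range m).map (fun j => (w (2*j+2), w (2*j+1)))) v) := by
  constructor
  · rw [ldeg_add, ldeg_map, ldeg_map]
    exact ⟨_, rfl⟩
  · rw [hdeg_add, hdeg_map, hdeg_map]
    have hs := shift_card (fun j => w (2*j)) v m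
    rw [hw] at hs
    simp only [Nat.mul_zero] at hs
    have hfe : (Multiset.range m).filter (fun j => w (2*j+2) = v)
        = (Multiset.range m).filter (fun j => w (2*(j+1)) = v) := by
      refine Multiset.filter_congr ?_
      intro j _
      rw [show 2*(j+1) = 2*j+2 from by ring]
    rw [hfe]
    have : ((Multiset.range m).filter (fun j => w (2*j) = v)).card
        = ((Multiset.range m).filter (fun j => w (2*(j+1)) = v)).card := by omega
    rw [this]
    exact ⟨_, rfl⟩

end APX

/-- If every vertex of a vertical multigraph has an even number of
edges to lower vertices and an even number of edges to higher vertices, then the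
edge multiset can be partitioned into alternating cycles. -/
theorem even_degrees_altPartition {n : ℕ} (E : Multiset (Fin n × Fin n))
    (hE : ∀ e ∈ E, e.1 < e.2)
    (h : ∀ v : Fin n, Even (ldeg E v) ∧ Even (hdeg E v)) :
    AltPartition E := by
  suffices H : ∀ (N : ℕ) (E : Multiset (Fin n × Fin n)), E.card ≤ N →
      (∀ e ∈ E, e.1 < e.2) → (∀ v, Even (ldeg E v) ∧ Even (hdeg E v)) → AltPartition E from
    H E.card E le_rfl hE h
  clear hE h E
  intro N
  induction N with
  | zero =>
    intro E hc _ _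
    have hE0 : E = 0 := Multiset.card_eq_zero.mp (Nat.le_zero.mp hc)
    exact ⟨0, Fin.elim0, by simp [hE0]⟩
  | succ N IH =>
    intro E hc hE h
    rcases eq_or_ne E 0 with rfl | hne
    · exact ⟨0, Fin.elim0, by simp⟩
    obtain ⟨e, he⟩ := Multiset.exists_mem_of_ne_zero hne
    have hlR : ∀ v, ¬ Even (ldeg (E.erase e) v) ↔ v = e.2 := by
      intro v
      have h1 := APX.ldeg_erase he v
      have h2 := (h v).1
      by_cases hv : e.2 = v
      · rw [if_pos hv] at h1
        refine iff_of_true ?_ hv.symm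
        simp only [Nat.even_iff] at h2 ⊢; omega
      · rw [if_neg hv] at h1
        refine iff_of_false (not_not_intro ?_) (fun hc2 => hv hc2.symm)
        simp only [Nat.even_iff] at h2 ⊢; omega
    have hhR : ∀ v, ¬ Even (hdeg (E.erase e) v) ↔ v = e.1 := by
      intro v
      have h1 := APX.hdeg_erase he v
      have h2 := (h v).2
      by_cases hv : e.1 = v
      · rw [if_pos hv] at h1
        refine iff_of_true ?_ hv.symm
        simp only [Nat.even_iff] at h2 ⊢; omega
      · rw [if_neg hv] at h1
        refine iff_of_false (not_not_intro ?_) (fun hc2 => hv hc2.symm)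
        simp only [Nat.even_iff] at h2 ⊢; omega
    obtain ⟨m, w, pos, hw0, hw1, hcl, hup, hdn, hle⟩ :=
      APX.trail (E.erase e).card (E.erase e) le_rfl
        (fun g hg => hE g (Multiset.mem_of_mem_erase hg)) e.1 e.2 hlR hhR
    have hupall : ∀ j < m, w (2*j) < w (2*j+1) := by
      intro j hj
      rcases Nat.eq_zero_or_pos j with rfl | hj0
      · rw [show (2*0 : ℕ) = 0 from rfl, show (2*0+1 : ℕ) = 1 from rfl, hw0, hw1]
        exact hE e he
      · exact hup j hj0 hj
    have hclosed : w (2*m) = w 0 := by rw [hcl, hw0]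
    let C : AltCycle n := ⟨m, pos, w, hclosed, hupall, hdn⟩
    have hupE : C.upEdges = e ::ₘ (Multiset.range (m-1)).map (fun j => (w (2*j+2), w (2*j+3))) := by
      show (Multiset.range m).map (fun j => (w (2*j), w (2*j+1))) = _
      rw [APX.cycle_edges m pos w]
      refine congrArg₂ Multiset.cons ?_ rfl
      rw [hw0, hw1]
    have hCedges : C.edges = e ::ₘ ((Multiset.range m).map (fun j => (w (2*j+2), w (2*j+1)))
        + (Multiset.range (m-1)).map (fun j => (w (2*j+2), w (2*j+3)))) := by
      show C.upEdges + C.downEdges = _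
      rw [hupE]
      show _ = e ::ₘ (_ + _)
      rw [Multiset.cons_add]
      rw [add_comm ((Multiset.range m).map (fun j => (w (2*j+2), w (2*j+1))))]
      rfl
    have hCle : C.edges ≤ E := by
      rw [hCedges, ← Multiset.cons_erase he]
      exact Multiset.cons_le_cons _ hle
    have hsplit : C.edges + (E - C.edges) = E := by
      rw [add_comm]; exact tsub_add_cancel_of_le hCle
    have hpar := APX.cycle_parity m w hclosed
    have hparC : ∀ v, Even (ldeg C.edges v) ∧ Even (hdeg C.edges v) := hpar
    have h' : ∀ v, Even (ldeg (E - C.edges) v) ∧ Even (hdeg (E - C.edges) v) := by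
      intro v
      have h1 : ldeg C.edges v + ldeg (E - C.edges) v = ldeg E v := by
        rw [← APX.ldeg_add, hsplit]
      have h2 : hdeg C.edges v + hdeg (E - C.edges) v = hdeg E v := by
        rw [← APX.hdeg_add, hsplit]
      have h3 := (h v).1
      have h4 := (h v).2
      have h5 := (hparC v).1
      have h6 := (hparC v).2
      simp only [Nat.even_iff] at h3 h4 h5 h6 ⊢
      omega
    have hE' : ∀ f ∈ E - C.edges, f.1 < f.2 := fun f hf =>
      hE f (Multiset.mem_of_le tsub_le_self hf)
    have hcard' : (E - C.edges).card ≤ N := by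
      have h1 : C.edges.card + (E - C.edges).card = E.card := by
        rw [← Multiset.card_add, hsplit]
      have h2 : 0 < C.edges.card := by
        rw [hCedges]; simp
      omega
    obtain ⟨k, Cs, hCs⟩ := IH (E - C.edges) hcard' hE' h'
    refine ⟨k+1, Fin.cons C Cs, ?_⟩
    rw [Fin.sum_univ_succ]
    simp only [Fin.cons_zero, Fin.cons_succ]
    rw [← hCs]
    exact hsplit.symm
end

section
/- A finite multigraph on a vertically ordered vertex set admits a partition of its edge set into alternating cycles if and only if every vertex has an even number of edges to strictly lower vertices and an even number of edges to strictly higher vertices. -/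
lemma ldeg_cons {n : ℕ} (e : Fin n × Fin n) (F : Multiset (Fin n × Fin n)) (v : Fin n) :
    ldeg (e ::ₘ F) v = (if e.2 = v then 1 else 0) + ldeg F v := by
  simp only [ldeg, Multiset.filter_cons, Multiset.card_add]
  split <;> simp

lemma hdeg_cons {n : ℕ} (e : Fin n × Fin n) (F : Multiset (Fin n × Fin n)) (v : Fin n) :
    hdeg (e ::ₘ F) v = (if e.1 = v then 1 else 0) + hdeg F v := by
  simp only [hdeg, Multiset.filter_cons, Multiset.card_add]
  split <;> simp

lemma exists_upper {n : ℕ} {F : Multiset (Fin n × Fin n)} {v : Fin n} (h : 0 < hdeg F v) :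
    ∃ e ∈ F, e.1 = v := by
  rw [hdeg, Multiset.card_pos] at h
  obtain ⟨e, he⟩ := Multiset.exists_mem_of_ne_zero h
  rw [Multiset.mem_filter] at he
  exact ⟨e, he.1, by simpa using he.2⟩

lemma exists_lower {n : ℕ} {F : Multiset (Fin n × Fin n)} {v : Fin n} (h : 0 < ldeg F v) :
    ∃ e ∈ F, e.2 = v := by
  rw [ldeg, Multiset.card_pos] at h
  obtain ⟨e, he⟩ := Multiset.exists_mem_of_ne_zero h
  rw [Multiset.mem_filter] at he
  exact ⟨e, he.1, by simpa using he.2⟩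

lemma map_range_succ_left {α : Type*} (f : ℕ → α) (m : ℕ) :
    (Multiset.range (m+1)).map f = f 0 ::ₘ (Multiset.range m).map (fun j => f (j+1)) := by
  have h : Multiset.range (m+1) = 0 ::ₘ (Multiset.range m).map Nat.succ := by
    simp [Multiset.range, List.range_succ_eq_map]
  rw [h, Multiset.map_cons, Multiset.map_map]
  rfl

lemma map_range_shift {α : Type*} (g : ℕ → α) (m : ℕ) (h : g m = g 0) :
    (Multiset.range m).map (fun j => g (j+1)) = (Multiset.range m).map g := by
  have h1 := map_range_succ_left g m
  have h2 : (Multiset.range (m+1)).map g = g m ::ₘ (Multiset.range m).map g := by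
    rw [Multiset.range_succ, Multiset.map_cons]
  rw [h1, h] at h2
  exact ((Multiset.cons_inj_right _).mp h2.symm).symm

def prew {n : ℕ} (c b : Fin n) (w' : ℕ → Fin n) : ℕ → Fin n :=
  fun j => if j = 0 then c else if j = 1 then b else w' (j-2)

@[simp] lemma prew0 {n : ℕ} (c b : Fin n) (w' : ℕ → Fin n) : prew c b w' 0 = c := rfl
@[simp] lemma prew1 {n : ℕ} (c b : Fin n) (w' : ℕ → Fin n) : prew c b w' 1 = b := rfl
@[simp] lemma prew2 {n : ℕ} (c b : Fin n) (w' : ℕ → Fin n) (k : ℕ) :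
    prew c b w' (k+2) = w' k := by simp [prew]

lemma prepend {n : ℕ} {c b a' : Fin n} (hcb : c < b) (hab : a' < b)
    (m' : ℕ) (w' : ℕ → Fin n) (h0 : w' 0 = a')
    (up' : ∀ j < m', w' (2*j) < w' (2*j+1)) (down' : ∀ j < m', w' (2*j+2) < w' (2*j+1)) :
    ∃ w : ℕ → Fin n, w 0 = c ∧ (∀ k, w (k+2) = w' k) ∧
    (∀ j < m'+1, w (2*j) < w (2*j+1)) ∧ (∀ j < m'+1, w (2*j+2) < w (2*j+1)) ∧
    (Multiset.range (m'+1)).map (fun j => (w (2*j), w (2*j+1))) =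
      (c, b) ::ₘ (Multiset.range m').map (fun j => (w' (2*j), w' (2*j+1))) ∧
    (Multiset.range (m'+1)).map (fun j => (w (2*j+2), w (2*j+1))) =
      (a', b) ::ₘ (Multiset.range m').map (fun j => (w' (2*j+2), w' (2*j+1))) := by
  refine ⟨prew c b w', rfl, fun k => prew2 c b w' k, ?_, ?_, ?_, ?_⟩
  · intro j hj
    rcases Nat.eq_zero_or_pos j with rfl | hj0
    · simpa using hcb
    · obtain ⟨j', rfl⟩ : ∃ j'', j = j'' + 1 := ⟨j-1, by omega⟩
      rw [show 2*(j'+1) = 2*j'+2 from by ring, show 2*j'+2+1 = 2*j'+1+2 from by ring,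
        prew2, prew2]
      exact up' j' (by omega)
  · intro j hj
    rcases Nat.eq_zero_or_pos j with rfl | hj0
    · rw [show 2*0+2 = 0+2 from by ring, prew2, h0, show 2*0+1 = 1 from by ring, prew1]
      exact hab
    · obtain ⟨j', rfl⟩ : ∃ j'', j = j'' + 1 := ⟨j-1, by omega⟩
      rw [show 2*(j'+1)+2 = (2*j'+2)+2 from by ring, show 2*(j'+1)+1 = 2*j'+1+2 from by ring,
        prew2, prew2]
      exact down' j' (by omega)
  · rw [map_range_succ_left]
    congr 1
  · rw [map_range_succ_left]
    congr 1
    · rw [show 2*0+2 = 0+2 from by ring, prew2, h0, show 2*0+1 = 1 from by ring, prew1]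

lemma lemA {n : ℕ} : ∀ N (F : Multiset (Fin n × Fin n)), F.card ≤ N →
    (∀ e ∈ F, e.1 < e.2) → ∀ (a0 c : Fin n), a0 ≠ c →
    (∀ v, Even (ldeg F v)) →
    (∀ v, v ≠ a0 → v ≠ c → Even (hdeg F v)) →
    Odd (hdeg F a0) → Odd (hdeg F c) →
    ∃ (m : ℕ) (w : ℕ → Fin n), 0 < m ∧ w 0 = c ∧ w (2*m) = a0 ∧
      (∀ j < m, w (2*j) < w (2*j+1)) ∧ (∀ j < m, w (2*j+2) < w (2*j+1)) ∧
      ((Multiset.range m).map (fun j => (w (2*j), w (2*j+1))) +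
       (Multiset.range m).map (fun j => (w (2*j+2), w (2*j+1)))) ≤ F := by
  intro N
  induction N with
  | zero =>
    intro F hcard _ a0 c _ _ _ hodd _
    interval_cases h : F.card
    · rw [Multiset.card_eq_zero] at h
      subst h
      simp [hdeg] at hodd
  | succ N ih =>
    intro F hcard hE a0 c hne hld hhd hodda hoddc
    have hpos : 0 < hdeg F c := hoddc.pos
    obtain ⟨e1, he1F, he1⟩ := exists_upper hpos
    set b := e1.2 with hb
    have hcb : c < b := he1 ▸ hE e1 he1F
    have he1eq : e1 = (c, b) := by rw [← he1, hb]
    set F1 := F.erase e1 with hF1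
    have hFc : F = e1 ::ₘ F1 := (Multiset.cons_erase he1F).symm
    have hld1 : ∀ v, ldeg F v = (if b = v then 1 else 0) + ldeg F1 v := by
      intro v
      rw [hFc, ldeg_cons, ← hb]
    have hposb : 0 < ldeg F1 b := by
      have := hld b
      rw [hld1 b, if_pos rfl] at this
      rcases this with ⟨t, ht⟩
      omega
    obtain ⟨e2, he2F1, he2⟩ := exists_lower hposb
    set a' := e2.1 with ha'
    have he2F : e2 ∈ F := Multiset.mem_of_le (Multiset.erase_le _ _) he2F1
    have hab : a' < b := by rw [ha', ← he2]; exact hE e2 he2F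
    have he2eq : e2 = (a', b) := by rw [ha', ← he2]
    set F2 := F1.erase e2 with hF2
    have hF1c : F1 = e2 ::ₘ F2 := (Multiset.cons_erase he2F1).symm
    have hldF2 : ∀ v, ldeg F v = (if b = v then 1 else 0) + ((if b = v then 1 else 0) + ldeg F2 v) := by
      intro v
      rw [hld1 v, hF1c, ldeg_cons, ← he2]
    have hhdF2 : ∀ v, hdeg F v = (if c = v then 1 else 0) + ((if a' = v then 1 else 0) + hdeg F2 v) := by
      intro v
      rw [hFc, hdeg_cons, ← he1, hF1c, hdeg_cons, ← ha']
    by_cases hcase : a' = a0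
    · -- terminate with a 2-edge trail c ↑ b ↓ a0
      refine ⟨1, prew c b (fun _ => a0), one_pos, rfl, ?_, ?_, ?_, ?_⟩
      · rw [show 2*1 = 0+2 from rfl, prew2]
      · intro j hj
        interval_cases j
        simpa using hcb
      · intro j hj
        interval_cases j
        rw [show 2*0+2 = 0+2 from rfl, prew2, show 2*0+1 = 1 from rfl, prew1]
        exact hcase ▸ hab
      · have h1 : (Multiset.range 1).map (fun j => (prew c b (fun _ => a0) (2*j), prew c b (fun _ => a0) (2*j+1))) = {(c, b)} := by
          simp [Multiset.range_succ]
        have h2 : (Multiset.range 1).map (fun j => (prew c b (fun _ => a0) (2*j+2), prew c b (fun _ => a0) (2*j+1))) = {(a0, b)} := by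
          simp [Multiset.range_succ]
        rw [h1, h2]
        have h3 : ({(c,b)} : Multiset (Fin n × Fin n)) + {(a0,b)} = (c,b) ::ₘ (a0,b) ::ₘ 0 := rfl
        rw [h3, hFc, hF1c, he1eq, he2eq, hcase]
        exact Multiset.cons_le_cons _ (Multiset.cons_le_cons _ (Multiset.zero_le _))
    · -- recurse
      have hcard2 : F2.card ≤ N := by
        have h1 : F.card = F1.card + 1 := by rw [hFc]; simp
        have h2 : F1.card = F2.card + 1 := by rw [hF1c]; simp
        omega
      have hE2 : ∀ e ∈ F2, e.1 < e.2 := fun e he =>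
        hE e (Multiset.mem_of_le (Multiset.erase_le _ _) (Multiset.mem_of_le (Multiset.erase_le _ _) he))
      have hld2 : ∀ v, Even (ldeg F2 v) := by
        intro v
        have h1 := hld v
        rw [hldF2 v] at h1
        rw [Nat.even_iff] at h1 ⊢
        split_ifs at h1 <;> omega
      have hhd2 : ∀ v, v ≠ a0 → v ≠ a' → Even (hdeg F2 v) := by
        intro v hv1 hv2
        have h1 := hhdF2 v
        rw [Nat.even_iff]
        by_cases hvc : v = c
        · subst hvc
          rw [if_pos rfl, if_neg (fun h => hv2 h.symm)] at h1
          have oc := Nat.odd_iff.mp hoddc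
          omega
        · have h2 := Nat.even_iff.mp (hhd v hv1 hvc)
          rw [if_neg (fun h => hvc h.symm), if_neg (fun h => hv2 h.symm)] at h1
          omega
      have hodda2 : Odd (hdeg F2 a0) := by
        have h1 := hhdF2 a0
        rw [if_neg (fun h : c = a0 => hne h.symm), if_neg hcase] at h1
        rw [Nat.odd_iff] at hodda ⊢
        omega
      have hodda'2 : Odd (hdeg F2 a') := by
        have h1 := hhdF2 a'
        rw [if_pos rfl] at h1
        by_cases hvc : a' = c
        · rw [if_pos hvc.symm] at h1
          rw [hvc] at h1 ⊢
          rw [Nat.odd_iff] at hoddc ⊢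
          omega
        · have h2 := Nat.even_iff.mp (hhd a' hcase hvc)
          rw [if_neg (fun h => hvc h.symm)] at h1
          rw [Nat.odd_iff]
          omega
      obtain ⟨m', w', hm', hw0, hwend, up', down', hle'⟩ :=
        ih F2 hcard2 hE2 a0 a' (fun h => hcase h.symm) hld2 hhd2 hodda2 hodda'2
      obtain ⟨w, hw0', hwk, upn, downn, hupeq, hdowneq⟩ :=
        prepend hcb hab m' w' hw0 up' down'
      refine ⟨m'+1, w, Nat.succ_pos _, hw0', ?_, upn, downn, ?_⟩
      · rw [show 2*(m'+1) = 2*m' + 2 from by ring, hwk, hwend]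
      · rw [hupeq, hdowneq]
        have h4 : (c,b) ::ₘ (Multiset.range m').map (fun j => (w' (2*j), w' (2*j+1))) +
            ((a',b) ::ₘ (Multiset.range m').map (fun j => (w' (2*j+2), w' (2*j+1)))) =
            (c,b) ::ₘ (a',b) ::ₘ ((Multiset.range m').map (fun j => (w' (2*j), w' (2*j+1))) +
              (Multiset.range m').map (fun j => (w' (2*j+2), w' (2*j+1)))) := by
          simp [Multiset.cons_add, Multiset.add_cons, Multiset.cons_swap]
        rw [h4, hFc, hF1c, he1eq, he2eq]
        exact Multiset.cons_le_cons _ (Multiset.cons_le_cons _ hle')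

lemma ldeg_add {n : ℕ} (A B : Multiset (Fin n × Fin n)) (v : Fin n) :
    ldeg (A + B) v = ldeg A v + ldeg B v := by
  simp [ldeg, Multiset.filter_add]

lemma hdeg_add {n : ℕ} (A B : Multiset (Fin n × Fin n)) (v : Fin n) :
    hdeg (A + B) v = hdeg A v + hdeg B v := by
  simp [hdeg, Multiset.filter_add]

/-- ldeg as an AddMonoidHom. -/
def ldegHom {n : ℕ} (v : Fin n) : Multiset (Fin n × Fin n) →+ ℕ where
  toFun E := ldeg E v
  map_zero' := by simp [ldeg]
  map_add' := fun A B => ldeg_add A B v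

def hdegHom {n : ℕ} (v : Fin n) : Multiset (Fin n × Fin n) →+ ℕ where
  toFun E := hdeg E v
  map_zero' := by simp [hdeg]
  map_add' := fun A B => hdeg_add A B v

lemma ldeg_sum {n k : ℕ} (f : Fin k → Multiset (Fin n × Fin n)) (v : Fin n) :
    ldeg (∑ i, f i) v = ∑ i, ldeg (f i) v :=
  map_sum (ldegHom v) f Finset.univ

lemma hdeg_sum {n k : ℕ} (f : Fin k → Multiset (Fin n × Fin n)) (v : Fin n) :
    hdeg (∑ i, f i) v = ∑ i, hdeg (f i) v :=
  map_sum (hdegHom v) f Finset.univ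

lemma ldeg_map {n : ℕ} (m : ℕ) (f : ℕ → Fin n × Fin n) (v : Fin n) :
    ldeg ((Multiset.range m).map f) v = ((Multiset.range m).filter (fun j => (f j).2 = v)).card := by
  rw [ldeg, ← Multiset.countP_eq_card_filter, Multiset.countP_map,
    ← Multiset.countP_eq_card_filter]

lemma hdeg_map {n : ℕ} (m : ℕ) (f : ℕ → Fin n × Fin n) (v : Fin n) :
    hdeg ((Multiset.range m).map f) v = ((Multiset.range m).filter (fun j => (f j).1 = v)).card := by
  rw [hdeg, ← Multiset.countP_eq_card_filter, Multiset.countP_map,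
    ← Multiset.countP_eq_card_filter]

lemma altCycle_ldeg_even {n : ℕ} (C : AltCycle n) (v : Fin n) : Even (ldeg C.edges v) := by
  rw [AltCycle.edges, ldeg_add, AltCycle.upEdges, AltCycle.downEdges, ldeg_map, ldeg_map]
  exact ⟨_, rfl⟩

lemma altCycle_hdeg_even {n : ℕ} (C : AltCycle n) (v : Fin n) : Even (hdeg C.edges v) := by
  rw [AltCycle.edges, hdeg_add, AltCycle.upEdges, AltCycle.downEdges, hdeg_map, hdeg_map]
  have key : (Multiset.range C.m).map (fun j => C.w (2*j+2)) =
      (Multiset.range C.m).map (fun j => C.w (2*j)) := by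
    have h1 : (Multiset.range C.m).map (fun j => C.w (2*j+2)) =
        (Multiset.range C.m).map (fun j => (fun i => C.w (2*i)) (j+1)) :=
      Multiset.map_congr rfl (fun j _ => by
        show C.w (2*j+2) = C.w (2*(j+1))
        rw [show 2*(j+1) = 2*j+2 from by ring])
    rw [h1]
    exact map_range_shift (fun i => C.w (2*i)) C.m (by simpa using C.closed)
  have h2 : ((Multiset.range C.m).filter (fun j => C.w (2*j+2) = v)).card =
      ((Multiset.range C.m).filter (fun j => C.w (2*j) = v)).card := by
    rw [← Multiset.countP_eq_card_filter, ← Multiset.countP_eq_card_filter]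
    have e1 : Multiset.countP (fun j => C.w (2*j+2) = v) (Multiset.range C.m) =
        Multiset.countP (fun x => x = v) ((Multiset.range C.m).map (fun j => C.w (2*j+2))) := by
      rw [Multiset.countP_map]
      exact Multiset.countP_eq_card_filter _ _
    have e2 : Multiset.countP (fun j => C.w (2*j) = v) (Multiset.range C.m) =
        Multiset.countP (fun x => x = v) ((Multiset.range C.m).map (fun j => C.w (2*j))) := by
      rw [Multiset.countP_map]
      exact Multiset.countP_eq_card_filter _ _
    rw [e1, e2, key]
  rw [h2]
  exact ⟨_, rfl⟩

lemma exists_altCycle {n : ℕ} (E : Multiset (Fin n × Fin n)) (hne : E ≠ 0)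
    (hE : ∀ e ∈ E, e.1 < e.2) (hld : ∀ v, Even (ldeg E v)) (hhd : ∀ v, Even (hdeg E v)) :
    ∃ C : AltCycle n, C.edges ≤ E := by
  obtain ⟨e1, he1F⟩ := Multiset.exists_mem_of_ne_zero hne
  set a := e1.1 with ha
  set b := e1.2 with hb
  have hcb : a < b := hE e1 he1F
  have he1eq : e1 = (a, b) := rfl
  set F1 := E.erase e1 with hF1
  have hFc : E = e1 ::ₘ F1 := (Multiset.cons_erase he1F).symm
  have hld1 : ∀ v, ldeg E v = (if b = v then 1 else 0) + ldeg F1 v := by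
    intro v
    rw [hFc, ldeg_cons, ← hb]
  have hposb : 0 < ldeg F1 b := by
    have := hld b
    rw [hld1 b, if_pos rfl] at this
    rcases this with ⟨t, ht⟩
    omega
  obtain ⟨e2, he2F1, he2⟩ := exists_lower hposb
  set a' := e2.1 with ha'
  have he2F : e2 ∈ E := Multiset.mem_of_le (Multiset.erase_le _ _) he2F1
  have hab : a' < b := by rw [ha', ← he2]; exact hE e2 he2F
  have he2eq : e2 = (a', b) := by rw [ha', ← he2]
  set F2 := F1.erase e2 with hF2
  have hF1c : F1 = e2 ::ₘ F2 := (Multiset.cons_erase he2F1).symm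
  have hldF2 : ∀ v, ldeg E v = (if b = v then 1 else 0) + ((if b = v then 1 else 0) + ldeg F2 v) := by
    intro v
    rw [hld1 v, hF1c, ldeg_cons, ← he2]
  have hhdF2 : ∀ v, hdeg E v = (if a = v then 1 else 0) + ((if a' = v then 1 else 0) + hdeg F2 v) := by
    intro v
    rw [hFc, hdeg_cons, ← ha, hF1c, hdeg_cons, ← ha']
  by_cases hcase : a' = a
  · -- 2-edge alternating cycle a ↑ b ↓ a
    refine ⟨⟨1, one_pos, prew a b (fun _ => a), ?_, ?_, ?_⟩, ?_⟩
    · rw [show 2*1 = 0+2 from rfl, prew2]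
      rfl
    · intro j hj
      interval_cases j
      simpa using hcb
    · intro j hj
      interval_cases j
      rw [show 2*0+2 = 0+2 from rfl, prew2, show 2*0+1 = 1 from rfl, prew1]
      exact hcb
    · show ((Multiset.range 1).map _ + (Multiset.range 1).map _) ≤ E
      have h1 : (Multiset.range 1).map (fun j => (prew a b (fun _ => a) (2*j), prew a b (fun _ => a) (2*j+1))) = {(a, b)} := by
        simp [Multiset.range_succ]
      have h2 : (Multiset.range 1).map (fun j => (prew a b (fun _ => a) (2*j+2), prew a b (fun _ => a) (2*j+1))) = {(a, b)} := by
        simp [Multiset.range_succ]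
      rw [h1, h2]
      have h3 : ({(a,b)} : Multiset (Fin n × Fin n)) + {(a,b)} = (a,b) ::ₘ (a,b) ::ₘ 0 := rfl
      rw [h3, hFc, hF1c, he1eq, he2eq, hcase]
      exact Multiset.cons_le_cons _ (Multiset.cons_le_cons _ (Multiset.zero_le _))
  · -- use lemA to find a trail from a' back to a, then prepend a ↑ b ↓ a'
    have hE2 : ∀ e ∈ F2, e.1 < e.2 := fun e he =>
      hE e (Multiset.mem_of_le (Multiset.erase_le _ _) (Multiset.mem_of_le (Multiset.erase_le _ _) he))
    have hld2 : ∀ v, Even (ldeg F2 v) := by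
      intro v
      have h1 := hld v
      rw [hldF2 v] at h1
      rw [Nat.even_iff] at h1 ⊢
      split_ifs at h1 <;> omega
    have hhd2 : ∀ v, v ≠ a → v ≠ a' → Even (hdeg F2 v) := by
      intro v hv1 hv2
      have h1 := hhdF2 v
      have h2 := Nat.even_iff.mp (hhd v)
      rw [if_neg (fun h => hv1 h.symm), if_neg (fun h => hv2 h.symm)] at h1
      rw [Nat.even_iff]
      omega
    have hodda2 : Odd (hdeg F2 a) := by
      have h1 := hhdF2 a
      have h2 := Nat.even_iff.mp (hhd a)
      rw [if_pos rfl, if_neg hcase] at h1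
      rw [Nat.odd_iff]
      omega
    have hodda'2 : Odd (hdeg F2 a') := by
      have h1 := hhdF2 a'
      have h2 := Nat.even_iff.mp (hhd a')
      rw [if_pos rfl, if_neg (fun h : a = a' => hcase h.symm)] at h1
      rw [Nat.odd_iff]
      omega
    obtain ⟨m', w', hm', hw0, hwend, up', down', hle'⟩ :=
      lemA F2.card F2 le_rfl hE2 a a' (fun h => hcase h.symm) hld2 hhd2 hodda2 hodda'2
    obtain ⟨w, hw0', hwk, upn, downn, hupeq, hdowneq⟩ :=
      prepend hcb hab m' w' hw0 up' down'
    refine ⟨⟨m'+1, Nat.succ_pos _, w, ?_, upn, downn⟩, ?_⟩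
    · rw [show 2*(m'+1) = 2*m' + 2 from by ring, hwk, hwend, hw0']
    · show ((Multiset.range (m'+1)).map _ + (Multiset.range (m'+1)).map _) ≤ E
      rw [hupeq, hdowneq]
      have h4 : (a,b) ::ₘ (Multiset.range m').map (fun j => (w' (2*j), w' (2*j+1))) +
          ((a',b) ::ₘ (Multiset.range m').map (fun j => (w' (2*j+2), w' (2*j+1)))) =
          (a,b) ::ₘ (a',b) ::ₘ ((Multiset.range m').map (fun j => (w' (2*j), w' (2*j+1))) +
            (Multiset.range m').map (fun j => (w' (2*j+2), w' (2*j+1)))) := by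
        simp [Multiset.cons_add, Multiset.add_cons, Multiset.cons_swap]
      rw [h4, hFc, hF1c, he1eq, he2eq]
      exact Multiset.cons_le_cons _ (Multiset.cons_le_cons _ hle')

lemma even_to_part {n : ℕ} : ∀ N (E : Multiset (Fin n × Fin n)), E.card ≤ N →
    (∀ e ∈ E, e.1 < e.2) → (∀ v, Even (ldeg E v) ∧ Even (hdeg E v)) → AltPartition E := by
  intro N
  induction N with
  | zero =>
    intro E hcard _ _
    have h : E = 0 := by
      rw [← Multiset.card_eq_zero]
      omega
    exact ⟨0, Fin.elim0, by simp [h]⟩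
  | succ N ih =>
    intro E hcard hE hev
    by_cases hE0 : E = 0
    · exact ⟨0, Fin.elim0, by simp [hE0]⟩
    · obtain ⟨C, hC⟩ := exists_altCycle E hE0 hE (fun v => (hev v).1) (fun v => (hev v).2)
      set E' := E - C.edges with hE'def
      have hEsum : C.edges + E' = E := add_tsub_cancel_of_le hC
      have hcardC : 2 ≤ Multiset.card C.edges := by
        rw [AltCycle.edges, AltCycle.upEdges, AltCycle.downEdges]
        simp only [Multiset.card_add, Multiset.card_map, Multiset.card_range]
        have := C.pos
        omega
      have hcard' : E'.card ≤ N := by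
        have h1 : Multiset.card E = Multiset.card C.edges + Multiset.card E' := by
          rw [← hEsum, Multiset.card_add]
        omega
      have hE'up : ∀ e ∈ E', e.1 < e.2 := fun e he =>
        hE e (Multiset.mem_of_le tsub_le_self he)
      have hev' : ∀ v, Even (ldeg E' v) ∧ Even (hdeg E' v) := by
        intro v
        have hl : ldeg E v = ldeg C.edges v + ldeg E' v := by rw [← hEsum, ldeg_add]
        have hh : hdeg E v = hdeg C.edges v + hdeg E' v := by rw [← hEsum, hdeg_add]
        have h1 := Nat.even_iff.mp (hev v).1
        have h2 := Nat.even_iff.mp (hev v).2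
        have h3 := Nat.even_iff.mp (altCycle_ldeg_even C v)
        have h4 := Nat.even_iff.mp (altCycle_hdeg_even C v)
        constructor <;> rw [Nat.even_iff] <;> omega
      obtain ⟨k, Cs, hCs⟩ := ih E' hcard' hE'up hev'
      refine ⟨k+1, Fin.cons C Cs, ?_⟩
      rw [Fin.sum_univ_succ]
      simp only [Fin.cons_zero, Fin.cons_succ]
      rw [← hCs, hEsum]

/-- Type 𝒢 Equivalence: a finite vertical multigraph admits a
partition of its edges into alternating cycles iff every vertex has an even
number of edges to strictly lower vertices and an even number of edges to
strictly higher vertices. -/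
theorem altPartition_iff_even_degrees {n : ℕ} (E : Multiset (Fin n × Fin n))
    (hE : ∀ e ∈ E, e.1 < e.2) :
    AltPartition E ↔ ∀ v : Fin n, Even (ldeg E v) ∧ Even (hdeg E v) := by
  constructor
  · rintro ⟨k, Cs, rfl⟩ v
    constructor
    · rw [ldeg_sum]
      exact Finset.even_sum _ (fun i _ => altCycle_ldeg_even (Cs i) v)
    · rw [hdeg_sum]
      exact Finset.even_sum _ (fun i _ => altCycle_hdeg_even (Cs i) v)
  · intro h
    exact even_to_part E.card E le_rfl hE h
end

section
/- If every vertex of a finite graph has even degree, then the edge set of the graph can be partitioned into cycles (Veblen's theorem). -/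
private lemma veblen_cycle_aux {V : Type*} [Fintype V] [DecidableEq V]
    (s : Finset (Sym2 V)) (hdiag : ∀ e ∈ s, ¬ e.IsDiag)
    (heven : ∀ v : V, Even ((s.filter (fun e => v ∈ e)).card)) :
    ∀ (d k : ℕ) (c : ℕ → V), Fintype.card V ≤ k + d → 1 ≤ k →
      (∀ j ≤ k, ∀ j' ≤ k, c j = c j' → j = j') →
      (∀ j < k, s(c j, c (j + 1)) ∈ s) →
      ∃ (m : ℕ) (w : ℕ → V), 3 ≤ m ∧ w m = w 0 ∧
        (∀ i < m, ∀ j < m, w i = w j → i = j) ∧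
        (∀ j < m, s(w j, w (j + 1)) ∈ s) := by
  intro d
  induction d with
  | zero =>
    intro k c hcard hk hinj _
    exfalso
    have h1 : (Finset.range (k+1)).card ≤ Fintype.card V := by
      have := Finset.card_le_card_of_injOn c (fun a _ => Finset.mem_univ _)
        (fun x hx y hy hxy => hinj x (by simpa using Nat.lt_succ_iff.mp (Finset.mem_range.mp hx))
          y (by simpa using Nat.lt_succ_iff.mp (Finset.mem_range.mp hy)) hxy)
      simpa using this
    simp [Finset.card_range] at h1
    omega
  | succ d ih =>
    intro k c hcard hk hinj hedge
    have he0 : s(c (k-1), c k) ∈ s := by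
      have := hedge (k-1) (by omega)
      rwa [Nat.sub_add_cancel hk] at this
    have hv0 : c k ∈ s(c (k-1), c k) := Sym2.mem_mk_right _ _
    have h1 : 0 < (s.filter (fun e => c k ∈ e)).card :=
      Finset.card_pos.mpr ⟨_, Finset.mem_filter.mpr ⟨he0, hv0⟩⟩
    have h2 : 1 < (s.filter (fun e => c k ∈ e)).card := by
      obtain ⟨t, ht⟩ := heven (c k); omega
    obtain ⟨a, ha, b, hb, hab⟩ := Finset.one_lt_card.mp h2
    obtain ⟨e, he, hvm, hne⟩ : ∃ e ∈ s, c k ∈ e ∧ e ≠ s(c (k-1), c k) := by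
      by_cases hae : a = s(c (k-1), c k)
      · refine ⟨b, (Finset.mem_filter.mp hb).1, (Finset.mem_filter.mp hb).2, ?_⟩
        rw [← hae]; exact (Ne.symm hab)
      · exact ⟨a, (Finset.mem_filter.mp ha).1, (Finset.mem_filter.mp ha).2, hae⟩
    obtain ⟨u, rfl⟩ : ∃ u, e = s(c k, u) := Sym2.mem_iff_exists.mp hvm
    have huv : u ≠ c k := by
      intro h; exact hdiag _ he (by rw [h]; exact Sym2.mk_isDiag_iff.mpr rfl)
    have hu1 : u ≠ c (k-1) := by
      intro h; apply hne; rw [h, Sym2.eq_swap]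
    by_cases hmem : ∃ i ≤ k, c i = u
    · obtain ⟨i, hik, hiu⟩ := hmem
      have hik1 : i ≠ k := by
        intro h; subst h; exact huv hiu.symm
      have hik2 : i ≠ k - 1 := by
        intro h; subst h; exact hu1 hiu.symm
      have hik' : i + 2 ≤ k := by omega
      set m := k - i + 1 with hm
      have hm3 : 3 ≤ m := by omega
      refine ⟨m, fun j => c (i + j % m), hm3, ?_, ?_, ?_⟩
      · simp [Nat.mod_self]
      · intro x hx y hy hxy
        change c (i + x % m) = c (i + y % m) at hxy
        rw [Nat.mod_eq_of_lt hx, Nat.mod_eq_of_lt hy] at hxy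
        have := hinj (i + x) (by omega) (i + y) (by omega) hxy
        omega
      · intro j hj
        rcases Nat.lt_or_ge (j+1) m with h | h
        · show s(c (i + j % m), c (i + (j+1) % m)) ∈ s
          rw [Nat.mod_eq_of_lt hj, Nat.mod_eq_of_lt h]
          exact hedge (i + j) (by omega)
        · have hj1 : j = m - 1 := by omega
          have h1 : (j + 1) % m = 0 := by
            have : j + 1 = m := by omega
            simp [this]
          show s(c (i + j % m), c (i + (j+1) % m)) ∈ s
          rw [Nat.mod_eq_of_lt hj, h1, hj1]
          have hik : i + (m - 1) = k := by omega
          rw [hik]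
          have : s(c k, c (i + 0)) = s(c k, u) := by rw [Nat.add_zero, hiu]
          rw [this]
          exact he
    · push_neg at hmem
      apply ih (k+1) (fun j => if j = k+1 then u else c j)
      · omega
      · omega
      · intro j hj j' hj' hjj'
        by_cases h1 : j = k + 1 <;> by_cases h2 : j' = k + 1
        · omega
        · exfalso
          simp only [h1, if_pos rfl, if_neg h2] at hjj'
          exact hmem j' (by omega) hjj'.symm
        · exfalso
          simp only [h2, if_pos rfl, if_neg h1] at hjj'
          exact hmem j (by omega) hjj'
        · simp only [if_neg h1, if_neg h2] at hjj'
          exact hinj j (by omega) j' (by omega) hjj'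
      · intro j hj
        show s((if j = k+1 then u else c j), (if j+1 = k+1 then u else c (j+1))) ∈ s
        by_cases h1 : j = k
        · rw [if_neg (by omega : ¬ j = k + 1), if_pos (by omega : j + 1 = k + 1), h1]
          exact he
        · rw [if_neg (by omega : ¬ j = k + 1), if_neg (by omega : ¬ j + 1 = k + 1)]
          exact hedge j (by omega)

private lemma veblen_main {V : Type*} [Fintype V] [DecidableEq V] (G : SimpleGraph V)
    [DecidableRel G.Adj] :
    ∀ (N : ℕ) (s : Finset (Sym2 V)), s.card ≤ N → s ⊆ G.edgeFinset →
      (∀ v : V, Even ((s.filter (fun e => v ∈ e)).card)) →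
      ∃ (k : ℕ) (len : Fin k → ℕ) (w : Fin k → ℕ → V),
        (∀ i, 0 < len i) ∧ (∀ i, w i (len i) = w i 0) ∧
        (∀ i, ∀ j < len i, G.Adj (w i j) (w i (j + 1))) ∧
        (∑ i, (Multiset.range (len i)).map (fun j => s(w i j, w i (j + 1)))) = s.val := by
  intro N
  induction N with
  | zero =>
    intro s hcard _ _
    have hs : s = ∅ := Finset.card_eq_zero.mp (Nat.le_zero.mp hcard)
    subst hs
    exact ⟨0, Fin.elim0, Fin.elim0, fun i => i.elim0, fun i => i.elim0, fun i => i.elim0, by simp⟩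
  | succ N ih =>
    intro s hcard hsub heven
    rcases s.eq_empty_or_nonempty with rfl | ⟨e, he⟩
    · exact ⟨0, Fin.elim0, Fin.elim0, fun i => i.elim0, fun i => i.elim0, fun i => i.elim0, by simp⟩
    have hdiag : ∀ e ∈ s, ¬ e.IsDiag := fun e he =>
      G.not_isDiag_of_mem_edgeSet (SimpleGraph.mem_edgeFinset.mp (hsub he))
    -- extract a starting edge
    obtain ⟨a, b, he⟩ : ∃ a b, s(a, b) ∈ s := by
      induction e using Sym2.ind with
      | _ x y => exact ⟨x, y, he⟩
    have hab : a ≠ b := fun h => hdiag _ he (by rw [h]; exact Sym2.mk_isDiag_iff.mpr rfl)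
    obtain ⟨m, w, hm3, hclosed, hinj, hedges⟩ :=
      veblen_cycle_aux s hdiag heven (Fintype.card V) 1 (fun j => if j = 0 then a else b)
        (by omega) le_rfl
        (by
          intro j hj j' hj' hjj'
          have hj0 : j = 0 ∨ j = 1 := by omega
          have hj'0 : j' = 0 ∨ j' = 1 := by omega
          rcases hj0 with rfl | rfl <;> rcases hj'0 with rfl | rfl
          · rfl
          · exfalso; simp only [reduceIte] at hjj'; exact hab hjj'
          · exfalso; simp only [reduceIte] at hjj'; exact hab hjj'.symm
          · rfl)
        (by
          intro j hj
          have : j = 0 := by omega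
          subst this
          simpa using he)
    -- the cycle's edge multiset
    set f : ℕ → Sym2 V := fun j => s(w j, w (j + 1)) with hf
    have hkey : ∀ x ∈ Multiset.range m, ∀ y ∈ Multiset.range m, f x = f y → x = y := by
      intro x hx y hy hxy
      rw [Multiset.mem_range] at hx hy
      rw [hf] at hxy
      simp only [Sym2.eq_iff] at hxy
      rcases hxy with ⟨h1, _⟩ | ⟨h1, h2⟩
      · exact hinj x hx y hy h1
      · -- w x = w (y+1), w (x+1) = w y
        by_cases hy1 : y + 1 < m <;> by_cases hx1 : x + 1 < m
        · have e1 := hinj x hx (y+1) hy1 h1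
          have e2 := hinj (x+1) hx1 y hy h2
          omega
        · have hx1' : x + 1 = m := by omega
          have e2 : w (x+1) = w 0 := by rw [hx1']; exact hclosed
          have e2' := hinj 0 (by omega) y hy (e2.symm.trans h2)
          have e1 := hinj x hx (y+1) hy1 h1
          omega
        · have hy1' : y + 1 = m := by omega
          have e1 : w (y+1) = w 0 := by rw [hy1']; exact hclosed
          have e1' := hinj x hx 0 (by omega) (h1.trans e1)
          have e2 := hinj (x+1) hx1 y hy h2
          omega
        · omega
    have hnodup : ((Multiset.range m).map f).Nodup :=
      Multiset.Nodup.map_on hkey (Multiset.nodup_range m)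
    set t : Finset (Sym2 V) := ⟨(Multiset.range m).map f, hnodup⟩ with ht
    have hts : t ⊆ s := by
      intro x hx
      rw [ht, Finset.mem_mk, Multiset.mem_map] at hx
      obtain ⟨j, hj, rfl⟩ := hx
      exact hedges j (Multiset.mem_range.mp hj)
    -- each vertex is in 0 or 2 edges of the cycle
    have hcount : ∀ v : V, (t.filter (fun e => v ∈ e)).card = 0 ∨
        (t.filter (fun e => v ∈ e)).card = 2 := by
      intro v
      have hcardeq : (t.filter (fun e => v ∈ e)).card
          = ((Finset.range m).filter (fun j => v ∈ f j)).card := by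
        have hval : (t.filter (fun e => v ∈ e)).val
            = (((Finset.range m).filter (fun j => v ∈ f j)).val).map f := by
          rw [Finset.filter_val, Finset.filter_val, Finset.range_val]
          show Multiset.filter (fun e => v ∈ e) ((Multiset.range m).map f) = _
          rw [Multiset.filter_map]
          rfl
        have := congrArg Multiset.card hval
        simpa [Finset.card] using this
      by_cases hv : ∃ i, i < m ∧ w i = v
      · right
        obtain ⟨i, him, hiv⟩ := hv
        set prev := if i = 0 then m - 1 else i - 1 with hprev
        have hiprev : i ≠ prev := by
          rw [hprev]; split_ifs with h <;> omega
        have hfil : (Finset.range m).filter (fun j => v ∈ f j) = {i, prev} := by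
          ext j
          simp only [Finset.mem_filter, Finset.mem_range, Finset.mem_insert,
            Finset.mem_singleton, hf, Sym2.mem_iff]
          constructor
          · rintro ⟨hj, hvj | hvj⟩
            · exact Or.inl (hinj j hj i him (hvj.symm.trans hiv.symm)).symm.symm
            · by_cases hj1 : j + 1 < m
              · have : i = j + 1 := hinj i him (j + 1) hj1 (hiv.trans hvj)
                right; rw [hprev, if_neg (by omega : ¬ i = 0)]; omega
              · have hj1' : j + 1 = m := by omega
                have hw0 : w (j + 1) = w 0 := by rw [hj1']; exact hclosed
                have : i = 0 := hinj i him 0 (by omega) (hiv.trans (hvj.trans hw0))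
                right; rw [hprev, if_pos this]; omega
          · rintro (rfl | rfl)
            · exact ⟨him, Or.inl hiv.symm⟩
            · by_cases hi0 : i = 0
              · have hp : prev = m - 1 := by rw [hprev, if_pos hi0]
                refine ⟨by omega, Or.inr ?_⟩
                rw [hp, (show m - 1 + 1 = m by omega), hclosed]
                rw [hi0] at hiv; exact hiv.symm
              · have hp : prev = i - 1 := by rw [hprev, if_neg hi0]
                refine ⟨by omega, Or.inr ?_⟩
                rw [(show prev + 1 = i by omega)]
                exact hiv.symm
        rw [hcardeq, hfil, Finset.card_pair hiprev]
      · left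
        rw [hcardeq, Finset.card_eq_zero, Finset.filter_eq_empty_iff]
        push_neg at hv
        intro j hj
        rw [Finset.mem_range] at hj
        rw [hf]
        simp only [Sym2.mem_iff]
        push_neg
        refine ⟨fun h => hv j hj h.symm, fun h => ?_⟩
        by_cases hj1 : j + 1 < m
        · exact hv (j + 1) hj1 h.symm
        · have hj1' : j + 1 = m := by omega
          have hw0 : w (j + 1) = w 0 := by rw [hj1']; exact hclosed
          exact hv 0 (by omega) (h.trans hw0).symm
    -- remove the cycle and recurse
    have htcard : t.card = m := by
      show Multiset.card ((Multiset.range m).map f) = m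
      rw [Multiset.card_map, Multiset.card_range]
    have hscard' : (s \ t).card ≤ N := by
      rw [Finset.card_sdiff_of_subset hts]; omega
    have heven' : ∀ v : V, Even (((s \ t).filter (fun e => v ∈ e)).card) := by
      intro v
      have hfil : (s \ t).filter (fun e => v ∈ e)
          = s.filter (fun e => v ∈ e) \ t.filter (fun e => v ∈ e) := by
        ext x
        simp only [Finset.mem_filter, Finset.mem_sdiff]
        tauto
      have hsubf : t.filter (fun e => v ∈ e) ⊆ s.filter (fun e => v ∈ e) :=
        Finset.filter_subset_filter _ hts
      rw [hfil, Finset.card_sdiff_of_subset hsubf]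
      rcases hcount v with h0 | h2
      · rw [h0]; simpa using heven v
      · have hle : 2 ≤ (s.filter (fun e => v ∈ e)).card :=
          h2 ▸ Finset.card_le_card hsubf
        rw [h2]
        exact (Nat.even_sub hle).mpr (iff_of_true (heven v) (by decide))
    obtain ⟨k, len, ww, hl1, hl2, hl3, hl4⟩ :=
      ih (s \ t) hscard' (fun x hx => hsub (Finset.mem_sdiff.mp hx).1) heven'
    refine ⟨k + 1, Fin.cons m len, Fin.cons w ww, ?_, ?_, ?_, ?_⟩
    · intro i
      refine Fin.cases ?_ ?_ i
      · simp only [Fin.cons_zero]; omega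
      · intro i; simpa only [Fin.cons_succ] using hl1 i
    · intro i
      refine Fin.cases ?_ ?_ i
      · simpa only [Fin.cons_zero] using hclosed
      · intro i; simpa only [Fin.cons_succ] using hl2 i
    · intro i
      refine Fin.cases ?_ ?_ i
      · intro j hj
        simp only [Fin.cons_zero] at hj ⊢
        exact (SimpleGraph.mem_edgeSet G).mp
          (SimpleGraph.mem_edgeFinset.mp (hsub (hedges j hj)))
      · intro i j hj
        simp only [Fin.cons_succ] at hj ⊢
        exact hl3 i j hj
    · rw [Fin.sum_univ_succ]
      simp only [Fin.cons_zero, Fin.cons_succ]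
      rw [hl4, Finset.sdiff_val]
      have hle : t.val ≤ s.val := Finset.val_le_iff.mpr hts
      show t.val + (s.val - t.val) = s.val
      exact add_tsub_cancel_of_le hle


/-- Veblen's theorem: if every vertex of a finite simple graph has
even degree, then the edge set can be partitioned into edge-disjoint cycles
(closed trails). -/
theorem veblen {V : Type*} [Fintype V] [DecidableEq V] (G : SimpleGraph V)
    [DecidableRel G.Adj] (h : ∀ v : V, Even (G.degree v)) :
    ∃ (k : ℕ) (len : Fin k → ℕ) (w : Fin k → ℕ → V),
      (∀ i, 0 < len i) ∧ (∀ i, w i (len i) = w i 0) ∧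
      (∀ i, ∀ j < len i, G.Adj (w i j) (w i (j + 1))) ∧
      (∑ i, (Multiset.range (len i)).map (fun j => s(w i j, w i (j + 1))))
        = G.edgeFinset.val := by
  exact veblen_main G G.edgeFinset.card G.edgeFinset le_rfl (fun x hx => hx)
    (fun v => by
      have hv := h v
      rwa [← SimpleGraph.card_incidenceFinset_eq_degree,
        SimpleGraph.incidenceFinset_eq_filter] at hv)
end

section
/- Let G_1 and G_2 be finite simple graphs on the same vertically ordered vertex set. If there exists a vertex v such that the number of neighbors of v strictly below v in G_1 differs from the number of neighbors of v strictly below v in G_2, then the verbose persistence diagrams of G_1 and G_2 for the upward lower-star filtration are distinct. Equivalently, if the diagrams agree in the up direction, then ldeg_{G_1}(v) = ldeg_{G_2}(v) for all v. -/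
section Aux

open Classical in
/-- Vertices that are connected to a strictly lower vertex. -/
noncomputable def deadSet {n : ℕ} (F : Multiset (Fin n × Fin n)) : Finset (Fin n) :=
  Finset.univ.filter (fun v => ∃ u, u < v ∧ Reach F u v)

open Classical in
lemma mem_deadSet {n : ℕ} {F : Multiset (Fin n × Fin n)} {v : Fin n} :
    v ∈ deadSet F ↔ ∃ u, u < v ∧ Reach F u v := by
  simp [deadSet]

lemma reach_symm {n : ℕ} {F : Multiset (Fin n × Fin n)} {a b : Fin n}
    (h : Reach F a b) : Reach F b a :=
  (@Relation.ReflTransGen.stdSymm _ _ ⟨fun _ _ hxy => hxy.symm⟩).symm _ _ h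

lemma reach_trans {n : ℕ} {F : Multiset (Fin n × Fin n)} {a b c : Fin n}
    (h : Reach F a b) (h' : Reach F b c) : Reach F a c := h.trans h'

lemma reach_mono {n : ℕ} {F F' : Multiset (Fin n × Fin n)} (hle : F ≤ F') {a b : Fin n}
    (h : Reach F a b) : Reach F' a b := by
  refine Relation.ReflTransGen.mono ?_ _ _ h
  intro x y hxy
  rcases hxy with h' | h'
  · exact Or.inl (Multiset.mem_of_le hle h')
  · exact Or.inr (Multiset.mem_of_le hle h')

lemma reach_cons {n : ℕ} {F : Multiset (Fin n × Fin n)} {e : Fin n × Fin n} {a b : Fin n}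
    (h : Reach (e ::ₘ F) a b) :
    Reach F a b ∨ (Reach F a e.1 ∧ Reach F e.2 b) ∨ (Reach F a e.2 ∧ Reach F e.1 b) := by
  induction h with
  | refl => exact Or.inl Relation.ReflTransGen.refl
  | @tail x c h1 h2 ih =>
    have step : ∀ {p q : Fin n}, ((p, q) ∈ F ∨ (q, p) ∈ F) →
        ∀ {z : Fin n}, Reach F z p → Reach F z q := by
      intro p q hpq z hz
      exact hz.tail hpq
    rcases h2 with h2 | h2 <;> rw [Multiset.mem_cons] at h2
    · rcases h2 with h2 | h2
      · subst h2
        rcases ih with ih | ih | ih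
        · exact Or.inr (Or.inl ⟨ih, Relation.ReflTransGen.refl⟩)
        · exact Or.inr (Or.inl ⟨ih.1, Relation.ReflTransGen.refl⟩)
        · exact Or.inl ih.1
      · rcases ih with ih | ih | ih
        · exact Or.inl (step (Or.inl h2) ih)
        · exact Or.inr (Or.inl ⟨ih.1, step (Or.inl h2) ih.2⟩)
        · exact Or.inr (Or.inr ⟨ih.1, step (Or.inl h2) ih.2⟩)
    · rcases h2 with h2 | h2
      · subst h2
        rcases ih with ih | ih | ih
        · exact Or.inr (Or.inr ⟨ih, Relation.ReflTransGen.refl⟩)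
        · exact Or.inl ih.1
        · exact Or.inr (Or.inr ⟨ih.1, Relation.ReflTransGen.refl⟩)
      · rcases ih with ih | ih | ih
        · exact Or.inl (step (Or.inr h2) ih)
        · exact Or.inr (Or.inl ⟨ih.1, step (Or.inr h2) ih.2⟩)
        · exact Or.inr (Or.inr ⟨ih.1, step (Or.inr h2) ih.2⟩)

lemma deadSet_mono {n : ℕ} {F F' : Multiset (Fin n × Fin n)} (hle : F ≤ F') :
    deadSet F ⊆ deadSet F' := by
  intro v hv
  rw [mem_deadSet] at hv ⊢
  obtain ⟨u, hu, hr⟩ := hv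
  exact ⟨u, hu, reach_mono hle hr⟩

lemma deadSet_cons_card {n : ℕ} (F : Multiset (Fin n × Fin n)) (e : Fin n × Fin n) :
    (deadSet (e ::ₘ F)).card ≤ (deadSet F).card + 1 := by
  classical
  -- new dead vertices form a subsingleton
  have hsub : deadSet (e ::ₘ F) ⊆ deadSet F ∪ (deadSet (e ::ₘ F) \ deadSet F) := by
    intro v hv
    by_cases h : v ∈ deadSet F
    · exact Finset.mem_union_left _ h
    · exact Finset.mem_union_right _ (Finset.mem_sdiff.mpr ⟨hv, h⟩)
  have hnew : ∀ v ∈ deadSet (e ::ₘ F) \ deadSet F, ∀ v' ∈ deadSet (e ::ₘ F) \ deadSet F,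
      v = v' := by
    intro v hv v' hv'
    rw [Finset.mem_sdiff, mem_deadSet, mem_deadSet] at hv hv'
    obtain ⟨⟨u, hu, hr⟩, hnd⟩ := hv
    obtain ⟨⟨u', hu', hr'⟩, hnd'⟩ := hv'
    push_neg at hnd hnd'
    -- v not dead in F
    rcases reach_cons hr with h | h | h
    · exact absurd h (hnd u hu)
    all_goals rcases reach_cons hr' with h' | h' | h'
    -- handle trivial contradictions
    · exact absurd h' (hnd' u' hu')
    · -- v: u~e.1, e.2~v ; v': u'~e.1, e.2~v'
      -- then v ~F v' (both connected to e.2)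
      have hvv' : Reach F v v' := reach_trans (reach_symm h.2) h'.2
      rcases lt_trichotomy v v' with hlt | heq | hlt
      · exact absurd (hnd' v hlt) (fun h'' => h'' hvv')
      · exact heq
      · exact absurd (hnd v' hlt) (fun h'' => h'' (reach_symm hvv'))
    · -- v: u~e.1, e.2~v ; v': u'~e.2, e.1~v'
      -- u ~F e.1 ~F v', so u' side: u' ~F e.2 ~F v
      have huv' : Reach F u v' := reach_trans h.1 h'.2
      have hu'v : Reach F u' v := reach_trans h'.1 h.2
      have h1 : ¬ u < v' := fun hlt => hnd' u hlt huv'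
      have h2 : ¬ u' < v := fun hlt => hnd u' hlt hu'v
      push_neg at h1 h2
      -- v' ≤ u < v and v ≤ u' < v' : contradiction
      exact absurd (lt_of_le_of_lt h1 hu) (not_lt.mpr (le_of_lt (lt_of_le_of_lt h2 hu')))
    · exact absurd h' (hnd' u' hu')
    · -- v: u~e.2, e.1~v ; v': u'~e.1, e.2~v'
      have huv' : Reach F u v' := reach_trans h.1 h'.2
      have hu'v : Reach F u' v := reach_trans h'.1 h.2
      have h1 : ¬ u < v' := fun hlt => hnd' u hlt huv'
      have h2 : ¬ u' < v := fun hlt => hnd u' hlt hu'v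
      push_neg at h1 h2
      exact absurd (lt_of_le_of_lt h1 hu) (not_lt.mpr (le_of_lt (lt_of_le_of_lt h2 hu')))
    · -- both connected to e.1
      have hvv' : Reach F v v' := reach_trans (reach_symm h.2) h'.2
      rcases lt_trichotomy v v' with hlt | heq | hlt
      · exact absurd (hnd' v hlt) (fun h'' => h'' hvv')
      · exact heq
      · exact absurd (hnd v' hlt) (fun h'' => h'' (reach_symm hvv'))
  calc (deadSet (e ::ₘ F)).card ≤ (deadSet F ∪ (deadSet (e ::ₘ F) \ deadSet F)).card :=
        Finset.card_le_card hsub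
    _ ≤ (deadSet F).card + (deadSet (e ::ₘ F) \ deadSet F).card := Finset.card_union_le _ _
    _ ≤ (deadSet F).card + 1 := by
        gcongr
        exact Finset.card_le_one.mpr hnew

lemma deadSet_add_card {n : ℕ} (F : Multiset (Fin n × Fin n)) (A : Multiset (Fin n × Fin n)) :
    (deadSet (F + A)).card ≤ (deadSet F).card + Multiset.card A := by
  induction A using Multiset.induction with
  | empty => simp
  | cons a A ih =>
    have : F + (a ::ₘ A) = a ::ₘ (F + A) := by
      rw [Multiset.add_cons]
    rw [this]
    calc (deadSet (a ::ₘ (F + A))).card ≤ (deadSet (F + A)).card + 1 := deadSet_cons_card _ _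
      _ ≤ (deadSet F).card + Multiset.card A + 1 := by gcongr
      _ = (deadSet F).card + Multiset.card (a ::ₘ A) := by simp [Nat.add_assoc]

lemma deadSet_zero {n : ℕ} : deadSet (0 : Multiset (Fin n × Fin n)) = ∅ := by
  ext v
  rw [mem_deadSet]
  simp only [Finset.notMem_empty, iff_false]
  rintro ⟨u, hu, hr⟩
  have : u = v := by
    induction hr with
    | refl => rfl
    | tail h1 h2 ih => simp at h2
  exact absurd this (ne_of_lt hu)

end Aux

section Aux2

def deathTimes {n : ℕ} (E : Multiset (Fin n × Fin n)) (v : Fin n) : Set ℕ :=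
  {j : ℕ | ∃ u, u < v ∧ Reach (levelEdges E j) u v}

lemma death0_eq_sInf {n : ℕ} (E : Multiset (Fin n × Fin n)) (v : Fin n) :
    death0 E v = sInf ((fun j : ℕ => (j : ℕ∞)) '' deathTimes E v) := rfl

lemma mem_deathTimes {n : ℕ} {E : Multiset (Fin n × Fin n)} {v : Fin n} {i : ℕ} :
    i ∈ deathTimes E v ↔ v ∈ deadSet (levelEdges E i) := by
  rw [mem_deadSet]; rfl

lemma sInf_image_deathTimes {n : ℕ} {E : Multiset (Fin n × Fin n)} {v : Fin n}
    (hne : (deathTimes E v).Nonempty) :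
    sInf ((fun j : ℕ => (j : ℕ∞)) '' deathTimes E v) = ((sInf (deathTimes E v) : ℕ) : ℕ∞) := by
  apply le_antisymm
  · exact sInf_le ⟨_, Nat.sInf_mem hne, rfl⟩
  · apply le_sInf
    rintro b ⟨i, hi, rfl⟩
    exact Nat.cast_le.mpr (Nat.sInf_le hi)

lemma death0_eq_coe_iff {n : ℕ} {E : Multiset (Fin n × Fin n)} {v : Fin n} {j : ℕ} :
    death0 E v = (j : ℕ∞) ↔
      v ∈ deadSet (levelEdges E j) ∧ ∀ i < j, v ∉ deadSet (levelEdges E i) := by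
  constructor
  · intro h
    have hne : (deathTimes E v).Nonempty := by
      by_contra hne
      rw [Set.not_nonempty_iff_eq_empty] at hne
      rw [death0_eq_sInf, hne] at h
      simp at h
    rw [death0_eq_sInf, sInf_image_deathTimes hne, Nat.cast_inj] at h
    subst h
    refine ⟨mem_deathTimes.mp (Nat.sInf_mem hne), fun i hi hmem => ?_⟩
    exact Nat.notMem_of_lt_sInf hi (mem_deathTimes.mpr hmem)
  · rintro ⟨h1, h2⟩
    have hj : j ∈ deathTimes E v := mem_deathTimes.mpr h1
    have hne : (deathTimes E v).Nonempty := ⟨j, hj⟩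
    rw [death0_eq_sInf, sInf_image_deathTimes hne, Nat.cast_inj]
    have hle : sInf (deathTimes E v) ≤ j := Nat.sInf_le hj
    rcases lt_or_eq_of_le hle with hlt | heq
    · exact absurd (mem_deathTimes.mp (Nat.sInf_mem hne)) (h2 _ hlt)
    · exact heq

lemma levelEdges_mono {n : ℕ} (E : Multiset (Fin n × Fin n)) {i j : ℕ} (hij : i ≤ j) :
    levelEdges E i ≤ levelEdges E j :=
  Multiset.monotone_filter_right _ (fun _ he => le_trans he hij)

open Classical in
lemma deaths0At_eq_card {n : ℕ} (E : Multiset (Fin n × Fin n)) (j : ℕ) :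
    deaths0At E j =
      (Finset.univ.filter (fun v : Fin n => death0 E v = (j : ℕ∞))).card := by
  unfold deaths0At
  rw [Nat.card_eq_fintype_card]
  convert Fintype.card_subtype _

open Classical in
lemma filter_death0_zero {n : ℕ} (E : Multiset (Fin n × Fin n)) :
    (Finset.univ.filter (fun v : Fin n => death0 E v = ((0 : ℕ) : ℕ∞))) =
      deadSet (levelEdges E 0) := by
  ext v
  simp only [Finset.mem_filter, Finset.mem_univ, true_and]
  rw [death0_eq_coe_iff]
  constructor
  · exact fun h => h.1
  · exact fun h => ⟨h, fun i hi => absurd hi (Nat.not_lt_zero i)⟩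

open Classical in
lemma filter_death0_succ {n : ℕ} (E : Multiset (Fin n × Fin n)) (j : ℕ) :
    (Finset.univ.filter (fun v : Fin n => death0 E v = ((j + 1 : ℕ) : ℕ∞))) =
      deadSet (levelEdges E (j + 1)) \ deadSet (levelEdges E j) := by
  ext v
  simp only [Finset.mem_filter, Finset.mem_univ, true_and, Finset.mem_sdiff]
  rw [death0_eq_coe_iff]
  constructor
  · exact fun h => ⟨h.1, h.2 j (Nat.lt_succ_self j)⟩
  · rintro ⟨h1, h2⟩
    refine ⟨h1, fun i hi hmem => ?_⟩
    have : i ≤ j := Nat.lt_succ_iff.mp hi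
    exact h2 (deadSet_mono (levelEdges_mono E this) hmem)

lemma levelEdges_zero_eq {n : ℕ} (E : Multiset (Fin n × Fin n)) :
    levelEdges E 0 = E.filter (fun e => (e.2 : ℕ) = 0) := by
  unfold levelEdges
  exact Multiset.filter_congr (fun e _ => by omega)

lemma levelEdges_succ_eq {n : ℕ} (E : Multiset (Fin n × Fin n)) (j : ℕ) :
    levelEdges E (j + 1) = levelEdges E j + E.filter (fun e => (e.2 : ℕ) = j + 1) := by
  unfold levelEdges
  rw [← Multiset.filter_add_not (fun e => (e.2 : ℕ) ≤ j)
      (Multiset.filter (fun e => (e.2 : ℕ) ≤ j + 1) E),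
    Multiset.filter_filter, Multiset.filter_filter]
  congr 1
  · exact Multiset.filter_congr (fun e _ => by omega)
  · exact Multiset.filter_congr (fun e _ => by omega)

lemma deaths0At_le_edgesAt {n : ℕ} (E : Multiset (Fin n × Fin n)) (j : ℕ) :
    deaths0At E j ≤ edgesAt E j := by
  classical
  cases j with
  | zero =>
    rw [deaths0At_eq_card, filter_death0_zero]
    have h0 : levelEdges E 0 = 0 + E.filter (fun e => (e.2 : ℕ) = 0) := by
      rw [levelEdges_zero_eq]; simp
    rw [h0]
    have := deadSet_add_card (0 : Multiset (Fin n × Fin n)) (E.filter (fun e => (e.2 : ℕ) = 0))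
    rw [deadSet_zero] at this
    simpa [edgesAt] using this
  | succ j =>
    rw [deaths0At_eq_card, filter_death0_succ]
    have hsub : deadSet (levelEdges E j) ⊆ deadSet (levelEdges E (j + 1)) :=
      deadSet_mono (levelEdges_mono E (Nat.le_succ j))
    rw [Finset.card_sdiff_of_subset hsub]
    have hcard : (deadSet (levelEdges E (j + 1))).card ≤
        (deadSet (levelEdges E j)).card + edgesAt E (j + 1) := by
      rw [levelEdges_succ_eq]
      exact deadSet_add_card _ _
    omega

open Classical in
lemma deaths0At_eq_of_diag {n : ℕ} {E1 E2 : Multiset (Fin n × Fin n)}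
    (h : diag0 E1 = diag0 E2) (j : ℕ) : deaths0At E1 j = deaths0At E2 j := by
  have hc := congrArg (Multiset.countP (fun p : ℕ × ℕ∞ => p.2 = (j : ℕ∞))) h
  rw [diag0, diag0, Multiset.countP_map, Multiset.countP_map] at hc
  rw [deaths0At_eq_card, deaths0At_eq_card]
  have e1 : ∀ E : Multiset (Fin n × Fin n),
      (Finset.univ.filter (fun v : Fin n => death0 E v = (j : ℕ∞))).card =
        Multiset.card (Multiset.filter
          (fun v : Fin n => ((v : ℕ), death0 E v).2 = (j : ℕ∞)) Finset.univ.val) := by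
    intro E
    rw [Finset.card, Finset.filter_val]
  rw [e1, e1, hc]

lemma edgesAt_eq_of_upDiagEq {n : ℕ} {E1 E2 : Multiset (Fin n × Fin n)}
    (h : UpDiagEq E1 E2) (j : ℕ) : edgesAt E1 j = edgesAt E2 j := by
  obtain ⟨hd, hc⟩ := h
  have h1 := deaths0At_le_edgesAt E1 j
  have h2 := deaths0At_le_edgesAt E2 j
  have h3 := deaths0At_eq_of_diag hd j
  have h4 := hc j
  unfold cyclesBornAt at h4
  omega

end Aux2

/-- If two vertical graphs on the same vertex set have a vertex with
different numbers of neighbours strictly below, then their verbose persistence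
diagrams for the upward lower-star filtration are distinct. -/
theorem ldeg_ne_implies_upDiag_ne {n : ℕ} (E1 E2 : Finset (Fin n × Fin n))
    (h1 : ∀ e ∈ E1, e.1 < e.2) (h2 : ∀ e ∈ E2, e.1 < e.2)
    (hv : ∃ v : Fin n, ldeg E1.val v ≠ ldeg E2.val v) :
    ¬ UpDiagEq E1.val E2.val := by
  intro h
  obtain ⟨v, hv⟩ := hv
  apply hv
  have key : ∀ E : Multiset (Fin n × Fin n), ldeg E v = edgesAt E (v : ℕ) := by
    intro E
    unfold ldeg edgesAt
    congr 1
    apply Multiset.filter_congr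
    intro e _
    exact ⟨fun h => by rw [h], fun h => Fin.ext h⟩
  rw [key, key]
  exact edgesAt_eq_of_upDiagEq h (v : ℕ)
end
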